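/- Fix t > 0 and two nonnegative kernels defining weighted operators I₁ and I₂ on (0,t) (each of the form f ↦ ∫₀ᵗ τ^k F_i(t,τ) f(τ) dτ). Let f and g be synchronous on [0,∞) and r, p, q : [0,∞) → [0,∞) nonnegative. Then: I₁[r]·(I₁[q]·I₂[p·f·g] + 2·I₁[p]·I₂[q·f·g] + I₂[q]·I₁[p·f·g]) + (I₁[p]·I₂[q] + I₂[p]·I₁[q])·I₁[r·f·g] ≥ I₁[r]·(I₁[p·f]·I₂[q·g] + I₂[q·f]·I₁[p·g]) + I₁[p]·(I₁[r·f]·I₂[q·g] + I₂[q·f]·I₁[r·g]) + I₁[q]·(I₁[r·f]·I₂[p·g] + I₂[p·f]·I₁[r·g]). -/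
import Mathlib

open MeasureTheory

/-- Weighted integral operator `I[φ] = ∫₀ᵗ τ^k F(τ) φ(τ) dτ`. -/
noncomputable def wInt (k t : ℝ) (F φ : ℝ → ℝ) : ℝ :=
  ∫ τ in (0:ℝ)..t, τ ^ k * F τ * φ τ

/-- Integrability of the weighted integrand. -/
def wIntble (k t : ℝ) (F φ : ℝ → ℝ) : Prop :=
  IntervalIntegrable (fun τ => τ ^ k * F τ * φ τ) volume 0 t

lemma integral_nonneg_Ioo (t : ℝ) (ht : 0 ≤ t) (h : ℝ → ℝ)
    (hh : ∀ τ ∈ Set.Ioo (0:ℝ) t, 0 ≤ h τ) : 0 ≤ ∫ τ in (0:ℝ)..t, h τ := by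
  rw [intervalIntegral.integral_of_le ht, integral_Ioc_eq_integral_Ioo]
  exact setIntegral_nonneg measurableSet_Ioo hh

lemma wInt_comb (k t : ℝ) (F b f g : ℝ → ℝ) (c1 c2 : ℝ)
    (h1 : wIntble k t F b) (h2 : wIntble k t F (fun v => b v * g v))
    (h3 : wIntble k t F (fun v => b v * f v))
    (h4 : wIntble k t F (fun v => b v * f v * g v)) :
    (∫ v in (0:ℝ)..t, (v ^ k * F v * b v) * ((c1 - f v) * (c2 - g v)))
      = c1 * c2 * wInt k t F b - c1 * wInt k t F (fun v => b v * g v)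
        - c2 * wInt k t F (fun v => b v * f v) + wInt k t F (fun v => b v * f v * g v) := by
  unfold wIntble at *
  unfold wInt
  rw [show (fun v => (v ^ k * F v * b v) * ((c1 - f v) * (c2 - g v)))
      = fun v => ((c1 * c2) * (v ^ k * F v * b v) - c1 * (v ^ k * F v * (b v * g v))
        - c2 * (v ^ k * F v * (b v * f v))) + (v ^ k * F v * (b v * f v * g v)) from
    funext fun v => by ring]
  rw [intervalIntegral.integral_add (((h1.const_mul _).sub (h2.const_mul _)).sub (h3.const_mul _)) h4,
    intervalIntegral.integral_sub ((h1.const_mul _).sub (h2.const_mul _)) (h3.const_mul _),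
    intervalIntegral.integral_sub (h1.const_mul _) (h2.const_mul _),
    intervalIntegral.integral_const_mul, intervalIntegral.integral_const_mul,
    intervalIntegral.integral_const_mul]

lemma wInt_comb2 (k t : ℝ) (F a f g : ℝ → ℝ) (C1 C2 C3 C4 : ℝ)
    (h1 : wIntble k t F a) (h2 : wIntble k t F (fun v => a v * f v))
    (h3 : wIntble k t F (fun v => a v * g v))
    (h4 : wIntble k t F (fun v => a v * f v * g v)) :
    (∫ u in (0:ℝ)..t, (u ^ k * F u * a u) * (f u * g u * C1 - f u * C2 - g u * C3 + C4))
      = C1 * wInt k t F (fun v => a v * f v * g v) - C2 * wInt k t F (fun v => a v * f v)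
        - C3 * wInt k t F (fun v => a v * g v) + C4 * wInt k t F a := by
  unfold wIntble at *
  unfold wInt
  rw [show (fun u => (u ^ k * F u * a u) * (f u * g u * C1 - f u * C2 - g u * C3 + C4))
      = fun u => (C1 * (u ^ k * F u * (a u * f u * g u)) - C2 * (u ^ k * F u * (a u * f u))
        - C3 * (u ^ k * F u * (a u * g u))) + C4 * (u ^ k * F u * a u) from
    funext fun u => by ring]
  rw [intervalIntegral.integral_add (((h4.const_mul _).sub (h2.const_mul _)).sub (h3.const_mul _)) (h1.const_mul _),
    intervalIntegral.integral_sub ((h4.const_mul _).sub (h2.const_mul _)) (h3.const_mul _),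
    intervalIntegral.integral_sub (h4.const_mul _) (h2.const_mul _),
    intervalIntegral.integral_const_mul, intervalIntegral.integral_const_mul,
    intervalIntegral.integral_const_mul, intervalIntegral.integral_const_mul]

lemma wInt_nonneg (k t : ℝ) (ht : 0 < t) (F φ : ℝ → ℝ)
    (hF : ∀ τ ∈ Set.Ioo (0:ℝ) t, 0 ≤ F τ) (hφ : ∀ u : ℝ, 0 ≤ u → 0 ≤ φ u) :
    0 ≤ wInt k t F φ := by
  apply integral_nonneg_Ioo t ht.le
  intro τ hτ
  have h1 : (0:ℝ) ≤ τ ^ k := Real.rpow_nonneg hτ.1.le k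
  exact mul_nonneg (mul_nonneg h1 (hF τ hτ)) (hφ τ hτ.1.le)

/-- Chebyshev inequality for two kernels and weights a, b. -/
lemma cheb (k t : ℝ) (ht : 0 < t) (F₁ F₂ f g a b : ℝ → ℝ)
    (hF₁ : ∀ τ ∈ Set.Ioo (0:ℝ) t, 0 ≤ F₁ τ)
    (hF₂ : ∀ τ ∈ Set.Ioo (0:ℝ) t, 0 ≤ F₂ τ)
    (hsync : ∀ u v : ℝ, 0 ≤ u → 0 ≤ v → 0 ≤ (f u - f v) * (g u - g v))
    (ha : ∀ u : ℝ, 0 ≤ u → 0 ≤ a u) (hb : ∀ u : ℝ, 0 ≤ u → 0 ≤ b u)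
    (ha1 : wIntble k t F₁ a) (ha2 : wIntble k t F₁ (fun v => a v * f v))
    (ha3 : wIntble k t F₁ (fun v => a v * g v))
    (ha4 : wIntble k t F₁ (fun v => a v * f v * g v))
    (hb1 : wIntble k t F₂ b) (hb2 : wIntble k t F₂ (fun v => b v * g v))
    (hb3 : wIntble k t F₂ (fun v => b v * f v))
    (hb4 : wIntble k t F₂ (fun v => b v * f v * g v)) :
    wInt k t F₁ (fun τ => a τ * f τ) * wInt k t F₂ (fun τ => b τ * g τ) +
      wInt k t F₂ (fun τ => b τ * f τ) * wInt k t F₁ (fun τ => a τ * g τ)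
    ≤ wInt k t F₁ a * wInt k t F₂ (fun τ => b τ * f τ * g τ) +
      wInt k t F₂ b * wInt k t F₁ (fun τ => a τ * f τ * g τ) := by
  set C1 := wInt k t F₂ b with hC1
  set C2 := wInt k t F₂ (fun v => b v * g v) with hC2
  set C3 := wInt k t F₂ (fun v => b v * f v) with hC3
  set C4 := wInt k t F₂ (fun v => b v * f v * g v) with hC4
  have hψ : ∀ u : ℝ, 0 ≤ u → 0 ≤ f u * g u * C1 - f u * C2 - g u * C3 + C4 := by
    intro u hu
    have hid := wInt_comb k t F₂ b f g (f u) (g u) hb1 hb2 hb3 hb4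
    rw [← hC1, ← hC2, ← hC3, ← hC4] at hid
    have hnn : 0 ≤ ∫ v in (0:ℝ)..t, (v ^ k * F₂ v * b v) * ((f u - f v) * (g u - g v)) := by
      apply integral_nonneg_Ioo t ht.le
      intro v hv
      have h1 : (0:ℝ) ≤ v ^ k := Real.rpow_nonneg hv.1.le k
      exact mul_nonneg (mul_nonneg (mul_nonneg h1 (hF₂ v hv)) (hb v hv.1.le))
        (hsync u v hu hv.1.le)
    linarith [hid ▸ hnn]
  have key : 0 ≤ C1 * wInt k t F₁ (fun v => a v * f v * g v)
      - C2 * wInt k t F₁ (fun v => a v * f v) - C3 * wInt k t F₁ (fun v => a v * g v)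
      + C4 * wInt k t F₁ a := by
    rw [← wInt_comb2 k t F₁ a f g C1 C2 C3 C4 ha1 ha2 ha3 ha4]
    apply integral_nonneg_Ioo t ht.le
    intro u hu
    have h1 : (0:ℝ) ≤ u ^ k := Real.rpow_nonneg hu.1.le k
    exact mul_nonneg (mul_nonneg (mul_nonneg h1 (hF₁ u hu)) (ha u hu.1.le)) (hψ u hu.1.le)
  linarith

theorem weighted_chebyshev_three_weights_two_kernels (k t : ℝ) (hk : 0 ≤ k) (ht : 0 < t)
    (F₁ F₂ f g r p q : ℝ → ℝ)
    (hF₁ : ∀ τ ∈ Set.Ioo (0:ℝ) t, 0 ≤ F₁ τ)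
    (hF₂ : ∀ τ ∈ Set.Ioo (0:ℝ) t, 0 ≤ F₂ τ)
    (hsync : ∀ u v : ℝ, 0 ≤ u → 0 ≤ v → 0 ≤ (f u - f v) * (g u - g v))
    (hr : ∀ u : ℝ, 0 ≤ u → 0 ≤ r u) (hp : ∀ u : ℝ, 0 ≤ u → 0 ≤ p u)
    (hq : ∀ u : ℝ, 0 ≤ u → 0 ≤ q u)
    (hint : ∀ φ ∈ [r, p, q, fun τ => q τ * f τ * g τ, fun τ => p τ * f τ * g τ,
        fun τ => r τ * f τ * g τ, fun τ => p τ * f τ, fun τ => q τ * g τ,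
        fun τ => q τ * f τ, fun τ => p τ * g τ, fun τ => r τ * f τ,
        fun τ => r τ * g τ], wIntble k t F₁ φ ∧ wIntble k t F₂ φ) :
    wInt k t F₁ r * (wInt k t F₁ q * wInt k t F₂ (fun τ => p τ * f τ * g τ) +
        2 * wInt k t F₁ p * wInt k t F₂ (fun τ => q τ * f τ * g τ) +
        wInt k t F₂ q * wInt k t F₁ (fun τ => p τ * f τ * g τ)) +
      (wInt k t F₁ p * wInt k t F₂ q + wInt k t F₂ p * wInt k t F₁ q) *
        wInt k t F₁ (fun τ => r τ * f τ * g τ) ≥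
    wInt k t F₁ r * (wInt k t F₁ (fun τ => p τ * f τ) * wInt k t F₂ (fun τ => q τ * g τ) +
        wInt k t F₂ (fun τ => q τ * f τ) * wInt k t F₁ (fun τ => p τ * g τ)) +
      wInt k t F₁ p * (wInt k t F₁ (fun τ => r τ * f τ) * wInt k t F₂ (fun τ => q τ * g τ) +
        wInt k t F₂ (fun τ => q τ * f τ) * wInt k t F₁ (fun τ => r τ * g τ)) +
      wInt k t F₁ q * (wInt k t F₁ (fun τ => r τ * f τ) * wInt k t F₂ (fun τ => p τ * g τ) +
        wInt k t F₂ (fun τ => p τ * f τ) * wInt k t F₁ (fun τ => r τ * g τ)) := by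
  obtain ⟨hr1, hr1'⟩ := hint r (by simp)
  obtain ⟨hp1, hp1'⟩ := hint p (by simp)
  obtain ⟨hq1, hq1'⟩ := hint q (by simp)
  obtain ⟨hqfg, hqfg'⟩ := hint _ (by simp : (fun τ => q τ * f τ * g τ) ∈ _)
  obtain ⟨hpfg, hpfg'⟩ := hint _ (by simp : (fun τ => p τ * f τ * g τ) ∈ _)
  obtain ⟨hrfg, hrfg'⟩ := hint _ (by simp : (fun τ => r τ * f τ * g τ) ∈ _)
  obtain ⟨hpf, hpf'⟩ := hint _ (by simp : (fun τ => p τ * f τ) ∈ _)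
  obtain ⟨hqg, hqg'⟩ := hint _ (by simp : (fun τ => q τ * g τ) ∈ _)
  obtain ⟨hqf, hqf'⟩ := hint _ (by simp : (fun τ => q τ * f τ) ∈ _)
  obtain ⟨hpg, hpg'⟩ := hint _ (by simp : (fun τ => p τ * g τ) ∈ _)
  obtain ⟨hrf, hrf'⟩ := hint _ (by simp : (fun τ => r τ * f τ) ∈ _)
  obtain ⟨hrg, hrg'⟩ := hint _ (by simp : (fun τ => r τ * g τ) ∈ _)
  have hR : 0 ≤ wInt k t F₁ r := wInt_nonneg k t ht F₁ r hF₁ hr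
  have hP : 0 ≤ wInt k t F₁ p := wInt_nonneg k t ht F₁ p hF₁ hp
  have hQ : 0 ≤ wInt k t F₁ q := wInt_nonneg k t ht F₁ q hF₁ hq
  have c1 := cheb k t ht F₁ F₂ f g p q hF₁ hF₂ hsync hp hq
    hp1 hpf hpg hpfg hq1' hqg' hqf' hqfg'
  have c2 := cheb k t ht F₁ F₂ f g r q hF₁ hF₂ hsync hr hq
    hr1 hrf hrg hrfg hq1' hqg' hqf' hqfg'
  have c3 := cheb k t ht F₁ F₂ f g r p hF₁ hF₂ hsync hr hp
    hr1 hrf hrg hrfg hp1' hpg' hpf' hpfg'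
  have m1 := mul_le_mul_of_nonneg_left c1 hR
  have m2 := mul_le_mul_of_nonneg_left c2 hP
  have m3 := mul_le_mul_of_nonneg_left c3 hQ
  nlinarith [m1, m2, m3]
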